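/- arXiv:1101.3454 — 7 statements merged into one kernel-verified Lean document; each statement's English description precedes it below -/
import Mathlib

section
/- Let f : ℝ → ℝ be continuous, c ∈ ℝ, and let Φ : ℝ → ℝ be a C² solution of Φ'' + c·Φ' + f(Φ) = 0 on ℝ with Φ(-∞) = 0, Φ(+∞) = 1, Φ'(±∞) = 0, and Φ' ∈ L²(ℝ). Then c · ∫_ℝ (Φ'(ξ))² dξ = F(1), where F(u) = -∫₀^u f(s) ds. In particular, if ∫_ℝ (Φ')² dξ > 0, then c = F(1) / ∫_ℝ (Φ')² dξ. -/
open MeasureTheory Filter Set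

/-- Multiplying the travelling-wave ODE by `Φ'` and integrating over `ℝ`
yields `c ∫ (Φ')² = F(1)` with `F(u) = -∫₀ᵘ f`. -/
theorem stmt_0 (f : ℝ → ℝ) (hf : Continuous f) (c : ℝ) (Φ : ℝ → ℝ)
    (hΦ : ContDiff ℝ 2 Φ)
    (hode : ∀ x : ℝ, deriv (deriv Φ) x + c * deriv Φ x + f (Φ x) = 0)
    (hlim0 : Tendsto Φ atBot (nhds 0))
    (hlim1 : Tendsto Φ atTop (nhds 1))
    (hdlim0 : Tendsto (deriv Φ) atBot (nhds 0))
    (hdlim1 : Tendsto (deriv Φ) atTop (nhds 0))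
    (hL2 : Integrable (fun x => (deriv Φ x) ^ 2)) :
    c * (∫ x : ℝ, (deriv Φ x) ^ 2) = -(∫ s in (0:ℝ)..1, f s) ∧
      (0 < ∫ x : ℝ, (deriv Φ x) ^ 2 →
        c = (-(∫ s in (0:ℝ)..1, f s)) / ∫ x : ℝ, (deriv Φ x) ^ 2) := by
  set g : ℝ → ℝ := fun x => (deriv Φ x) ^ 2 / 2 + ∫ s in (0:ℝ)..(Φ x), f s with hg
  have hΦ' : ∀ x, HasDerivAt Φ (deriv Φ x) x := fun x =>
    ((hΦ.differentiable (by norm_num)) x).hasDerivAt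
  have hΦ'' : ∀ x, HasDerivAt (deriv Φ) (deriv (deriv Φ) x) x := by
    intro x
    have : Differentiable ℝ (deriv Φ) := by
      have := (contDiff_succ_iff_deriv (n := 1)).mp hΦ
      exact this.2.2.differentiable (by norm_num)
    exact (this x).hasDerivAt
  have hF : ∀ u : ℝ, HasDerivAt (fun u => ∫ s in (0:ℝ)..u, f s) (f u) u := fun u =>
    intervalIntegral.integral_hasDerivAt_right (hf.intervalIntegrable 0 u)
      (hf.stronglyMeasurableAtFilter _ _) hf.continuousAt
  have hgderiv : ∀ x, HasDerivAt g (-c * (deriv Φ x) ^ 2) x := by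
    intro x
    have h1 : HasDerivAt (fun x => (deriv Φ x) ^ 2 / 2)
        (deriv Φ x * deriv (deriv Φ) x) x := by
      have := ((hΦ'' x).pow 2).div_const 2
      refine this.congr_deriv ?_
      ring
    have h2 : HasDerivAt (fun x => ∫ s in (0:ℝ)..(Φ x), f s)
        (f (Φ x) * deriv Φ x) x := (hF (Φ x)).comp x (hΦ' x)
    have := h1.add h2
    refine this.congr_deriv ?_
    have h := hode x
    have : f (Φ x) = -(deriv (deriv Φ) x + c * deriv Φ x) := by linarith
    rw [this]; ring
  have hFcont : Continuous (fun u => ∫ s in (0:ℝ)..u, f s) := by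
    have : Differentiable ℝ (fun u => ∫ s in (0:ℝ)..u, f s) :=
      fun u => (hF u).differentiableAt
    exact this.continuous
  have hgbot : Tendsto g atBot (nhds 0) := by
    have h1 : Tendsto (fun x => (deriv Φ x) ^ 2 / 2) atBot (nhds (0 ^ 2 / 2)) :=
      ((hdlim0.pow 2).div_const 2)
    have h2 : Tendsto (fun x => ∫ s in (0:ℝ)..(Φ x), f s) atBot
        (nhds (∫ s in (0:ℝ)..(0:ℝ), f s)) := (hFcont.tendsto 0).comp hlim0
    have := h1.add h2
    simpa using this
  have hgtop : Tendsto g atTop (nhds (∫ s in (0:ℝ)..1, f s)) := by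
    have h1 : Tendsto (fun x => (deriv Φ x) ^ 2 / 2) atTop (nhds (0 ^ 2 / 2)) :=
      ((hdlim1.pow 2).div_const 2)
    have h2 : Tendsto (fun x => ∫ s in (0:ℝ)..(Φ x), f s) atTop
        (nhds (∫ s in (0:ℝ)..(1:ℝ), f s)) := (hFcont.tendsto 1).comp hlim1
    have := h1.add h2
    simpa using this
  have hint : Integrable (fun x => -c * (deriv Φ x) ^ 2) := hL2.const_mul _
  have key : ∫ x : ℝ, -c * (deriv Φ x) ^ 2 = (∫ s in (0:ℝ)..1, f s) - 0 :=
    integral_of_hasDerivAt_of_tendsto hgderiv hint hgbot hgtop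
  rw [integral_const_mul] at key
  have hmain : c * (∫ x : ℝ, (deriv Φ x) ^ 2) = -(∫ s in (0:ℝ)..1, f s) := by
    linarith
  exact ⟨hmain, fun hpos => by field_simp [ne_of_gt hpos, ← hmain, mul_comm]; exact hmain⟩
end

section
/- Let f ∈ C¹ with f(0) = f(1) = 0, c ∈ ℝ, and let Φ : ℝ → ℝ be a C² solution of Φ'' + c Φ' + f(Φ) = 0 with 0 ≤ Φ ≤ 1, Φ' ∈ L²(ℝ), and Φ'(±∞) = 0. Then Φ'' ∈ L²(ℝ), and moreover ∫_ℝ (Φ'')² dξ = ∫_ℝ f'(Φ)·(Φ')² dξ. -/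
open MeasureTheory Filter Set

/-- For a bounded travelling-wave profile with `Φ' ∈ L²` and `Φ'(±∞) = 0`,
one has `Φ'' ∈ L²` and `∫ (Φ'')² = ∫ f'(Φ)(Φ')²`. -/
theorem stmt_2 (f : ℝ → ℝ) (hf : ContDiff ℝ 1 f) (hf0 : f 0 = 0) (hf1 : f 1 = 0)
    (c : ℝ) (Φ : ℝ → ℝ) (hΦ : ContDiff ℝ 2 Φ)
    (hode : ∀ x : ℝ, deriv (deriv Φ) x + c * deriv Φ x + f (Φ x) = 0)
    (hrange : ∀ x : ℝ, 0 ≤ Φ x ∧ Φ x ≤ 1)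
    (hL2 : Integrable (fun x => (deriv Φ x) ^ 2))
    (hdlim0 : Tendsto (deriv Φ) atBot (nhds 0))
    (hdlim1 : Tendsto (deriv Φ) atTop (nhds 0)) :
    Integrable (fun x => (deriv (deriv Φ) x) ^ 2) ∧
      (∫ x : ℝ, (deriv (deriv Φ) x) ^ 2) =
        ∫ x : ℝ, deriv f (Φ x) * (deriv Φ x) ^ 2 := by
  -- basic regularity
  have hΦdiff : Differentiable ℝ Φ := hΦ.differentiable (by norm_num)
  have hΦ' : ContDiff ℝ 1 (deriv Φ) := by
    have := contDiff_succ_iff_deriv.mp (show ContDiff ℝ (1 + 1) Φ by norm_num [hΦ])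
    exact this.2.2
  have hΦ'diff : Differentiable ℝ (deriv Φ) := hΦ'.differentiable (by norm_num)
  have hΦ'cont : Continuous (deriv Φ) := hΦ'diff.continuous
  have hΦ''cont : Continuous (deriv (deriv Φ)) := (contDiff_one_iff_deriv.mp hΦ').2
  have hfdiff : Differentiable ℝ f := hf.differentiable (by norm_num)
  have hf'cont : Continuous (deriv f) := (contDiff_one_iff_deriv.mp hf).2
  have hΦcont : Continuous Φ := hΦdiff.continuous
  -- bounds for f and deriv f on [0,1]
  obtain ⟨L, hL⟩ := (isCompact_Icc (a := (0:ℝ)) (b := 1)).exists_bound_of_continuousOn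
    hf'cont.continuousOn
  obtain ⟨M, hM⟩ := (isCompact_Icc (a := (0:ℝ)) (b := 1)).exists_bound_of_continuousOn
    hfdiff.continuous.continuousOn
  have hmem : ∀ x : ℝ, Φ x ∈ Icc (0:ℝ) 1 := fun x => ⟨(hrange x).1, (hrange x).2⟩
  -- integrability of f'(Φ)(Φ')²
  have hIcont : Continuous fun x => deriv f (Φ x) * (deriv Φ x) ^ 2 :=
    (hf'cont.comp hΦcont).mul (hΦ'cont.pow 2)
  have hInt : Integrable fun x => deriv f (Φ x) * (deriv Φ x) ^ 2 := by
    refine (hL2.const_mul L).mono' hIcont.aestronglyMeasurable ?_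
    filter_upwards with x
    have h1 : |deriv f (Φ x)| ≤ L := hL _ (hmem x)
    have h2 : (0:ℝ) ≤ (deriv Φ x) ^ 2 := sq_nonneg _
    calc ‖deriv f (Φ x) * (deriv Φ x) ^ 2‖ = |deriv f (Φ x)| * (deriv Φ x) ^ 2 := by
          rw [Real.norm_eq_abs, abs_mul, abs_of_nonneg h2]
      _ ≤ L * (deriv Φ x) ^ 2 := by nlinarith
  set I := ∫ x : ℝ, deriv f (Φ x) * (deriv Φ x) ^ 2 with hI
  -- the boundary function
  set G : ℝ → ℝ := fun x => c / 2 * (deriv Φ x) ^ 2 + f (Φ x) * deriv Φ x with hG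
  have hGderiv : ∀ x : ℝ, HasDerivAt G
      (c * deriv Φ x * deriv (deriv Φ) x + deriv f (Φ x) * (deriv Φ x) ^ 2
        + f (Φ x) * deriv (deriv Φ) x) x := by
    intro x
    have hd1 : HasDerivAt Φ (deriv Φ x) x := (hΦdiff x).hasDerivAt
    have hd2 : HasDerivAt (deriv Φ) (deriv (deriv Φ) x) x := (hΦ'diff x).hasDerivAt
    have hdf : HasDerivAt (fun y => f (Φ y)) (deriv f (Φ x) * deriv Φ x) x :=
      ((hfdiff (Φ x)).hasDerivAt).comp x hd1
    have := (((hd2.pow 2).const_mul (c / 2)).add (hdf.mul hd2))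
    convert this using 1
    · rfl
    · rfl
    · rfl
    · push_cast; ring
  -- pointwise identity
  have hkey : ∀ x : ℝ, (deriv (deriv Φ) x) ^ 2 =
      deriv f (Φ x) * (deriv Φ x) ^ 2 -
        (c * deriv Φ x * deriv (deriv Φ) x + deriv f (Φ x) * (deriv Φ x) ^ 2
          + f (Φ x) * deriv (deriv Φ) x) := by
    intro x
    have h : deriv (deriv Φ) x = -(c * deriv Φ x + f (Φ x)) := by linarith [hode x]
    rw [h]; ring
  -- interval identity
  have hgcont : Continuous fun x => c * deriv Φ x * deriv (deriv Φ) x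
      + deriv f (Φ x) * (deriv Φ x) ^ 2 + f (Φ x) * deriv (deriv Φ) x :=
    (((continuous_const.mul hΦ'cont).mul hΦ''cont).add hIcont).add
      ((hfdiff.continuous.comp hΦcont).mul hΦ''cont)
  have hinterval : ∀ a b : ℝ, (∫ x in a..b, (deriv (deriv Φ) x) ^ 2) =
      (∫ x in a..b, deriv f (Φ x) * (deriv Φ x) ^ 2) - (G b - G a) := by
    intro a b
    have hFTC : (∫ x in a..b, (c * deriv Φ x * deriv (deriv Φ) x
        + deriv f (Φ x) * (deriv Φ x) ^ 2 + f (Φ x) * deriv (deriv Φ) x)) = G b - G a :=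
      intervalIntegral.integral_eq_sub_of_hasDerivAt (fun x _ => hGderiv x)
        (hgcont.intervalIntegrable a b)
    calc (∫ x in a..b, (deriv (deriv Φ) x) ^ 2)
        = ∫ x in a..b, (deriv f (Φ x) * (deriv Φ x) ^ 2 -
            (c * deriv Φ x * deriv (deriv Φ) x + deriv f (Φ x) * (deriv Φ x) ^ 2
              + f (Φ x) * deriv (deriv Φ) x)) := by
          apply intervalIntegral.integral_congr
          intro x _
          exact hkey x
      _ = (∫ x in a..b, deriv f (Φ x) * (deriv Φ x) ^ 2) - (G b - G a) := by
          rw [intervalIntegral.integral_sub (hIcont.intervalIntegrable a b)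
            (hgcont.intervalIntegrable a b), hFTC]
  -- G tends to 0 at ±∞
  have hGlim : ∀ l : Filter ℝ, Tendsto (deriv Φ) l (nhds 0) → Tendsto G l (nhds 0) := by
    intro l hl
    have h1 : Tendsto (fun x => c / 2 * (deriv Φ x) ^ 2) l (nhds 0) := by
      have := ((hl.pow 2).const_mul (c / 2))
      simpa using this
    have h2 : Tendsto (fun x => f (Φ x) * deriv Φ x) l (nhds 0) := by
      apply squeeze_zero_norm (a := fun x => M * ‖deriv Φ x‖)
      · intro x
        rw [norm_mul]
        have := hM _ (hmem x)
        have := norm_nonneg (deriv Φ x)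
        nlinarith
      · simpa using (hl.norm.const_mul M)
    simpa using h1.add h2
  have hGtop : Tendsto G atTop (nhds 0) := hGlim _ hdlim1
  have hGbot : Tendsto G atBot (nhds 0) := hGlim _ hdlim0
  -- sequences of endpoints
  have hbn : Tendsto (fun n : ℕ => (n : ℝ)) atTop atTop := tendsto_natCast_atTop_atTop
  have han : Tendsto (fun n : ℕ => -(n : ℝ)) atTop atBot := tendsto_neg_atBot_iff.mpr hbn
  -- the interval integrals tend to I
  have hTend : Tendsto (fun n : ℕ => ∫ x in (-(n:ℝ))..(n:ℝ), (deriv (deriv Φ) x) ^ 2)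
      atTop (nhds I) := by
    have hT1 : Tendsto (fun n : ℕ => ∫ x in (-(n:ℝ))..(n:ℝ),
        deriv f (Φ x) * (deriv Φ x) ^ 2) atTop (nhds I) :=
      intervalIntegral_tendsto_integral hInt han hbn
    have hT2 : Tendsto (fun n : ℕ => G ((n:ℝ)) - G (-(n:ℝ))) atTop (nhds 0) := by
      have := (hGtop.comp hbn).sub (hGbot.comp han)
      simpa using this
    have := hT1.sub hT2
    simp only [sub_zero] at this
    apply this.congr
    intro n
    exact (hinterval (-(n:ℝ)) (n:ℝ)).symm
  -- integrability
  have hnorm : ∀ x : ℝ, ‖(deriv (deriv Φ) x) ^ 2‖ = (deriv (deriv Φ) x) ^ 2 := fun x =>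
    Real.norm_of_nonneg (sq_nonneg _)
  have hIntegrable : Integrable fun x => (deriv (deriv Φ) x) ^ 2 := by
    apply integrable_of_intervalIntegral_norm_tendsto I
      (fun n : ℕ => (hΦ''cont.pow 2).integrableOn_Ioc) han hbn
    apply hTend.congr
    intro n
    apply intervalIntegral.integral_congr
    intro x _
    exact (hnorm x).symm
  refine ⟨hIntegrable, ?_⟩
  exact tendsto_nhds_unique (intervalIntegral_tendsto_integral hIntegrable han hbn) hTend
end

section
/- Consider the planar autonomous system U' = V, V' = -cV - f(U), where f is continuous with f(0) = f(1) = 0, f < 0 on (0,α), f > 0 on (α,1) for some α ∈ (0,1). Let (U,V) : [0,r] → ℝ² be a solution with U(0) = 0, V(0) = θ > 0, U(r) = 1, V(r) = Υ > 0, and 0 ≤ U(ξ) ≤ 1 for all ξ ∈ [0,r]. Then V(ξ) > 0 for all ξ ∈ [0,r], and consequently U is strictly increasing on [0,r]. -/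
open Set

/-- Auxiliary lemma: the case `c ≤ 0`, positivity of `V`. -/
lemma stmt_3_aux (f : ℝ → ℝ) (hf : Continuous f) (hf0 : f 0 = 0) (hf1 : f 1 = 0)
    (α : ℝ) (hα : α ∈ Ioo (0:ℝ) 1)
    (hfneg : ∀ u ∈ Ioo (0:ℝ) α, f u < 0)
    (hfpos : ∀ u ∈ Ioo α (1:ℝ), f u > 0)
    (c r θ Υ : ℝ) (hc : c ≤ 0) (hr : 0 < r) (hθ : 0 < θ) (hΥ : 0 < Υ)
    (U V : ℝ → ℝ)
    (hU : ∀ ξ ∈ Icc (0:ℝ) r, HasDerivAt U (V ξ) ξ)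
    (hV : ∀ ξ ∈ Icc (0:ℝ) r, HasDerivAt V (-c * V ξ - f (U ξ)) ξ)
    (hU0 : U 0 = 0) (hV0 : V 0 = θ) (hVr : V r = Υ)
    (hrange : ∀ ξ ∈ Icc (0:ℝ) r, 0 ≤ U ξ ∧ U ξ ≤ 1) :
    ∀ ξ ∈ Icc (0:ℝ) r, 0 < V ξ := by
  by_contra hcon
  push_neg at hcon
  obtain ⟨ξ₀, hξ₀, hVξ₀⟩ := hcon
  -- sign facts about f at α
  have hfα_le : f α ≤ 0 := by
    have h1 : Filter.Tendsto f (nhdsWithin α (Iio α)) (nhds (f α)) :=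
      (hf.continuousAt).continuousWithinAt.tendsto
    refine le_of_tendsto h1 ?_
    filter_upwards [Ioo_mem_nhdsLT_of_mem (show α ∈ Ioc (0:ℝ) α from ⟨hα.1, le_refl _⟩)]
      with u hu
    exact (hfneg u hu).le
  have hfα_ge : 0 ≤ f α := by
    have h1 : Filter.Tendsto f (nhdsWithin α (Ioi α)) (nhds (f α)) :=
      (hf.continuousAt).continuousWithinAt.tendsto
    refine ge_of_tendsto h1 ?_
    filter_upwards [Ioo_mem_nhdsGT_of_mem (show α ∈ Ico α (1:ℝ) from ⟨le_refl _, hα.2⟩)]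
      with u hu
    exact (hfpos u hu).le
  have hfle : ∀ u ∈ Icc (0:ℝ) α, f u ≤ 0 := by
    intro u hu
    rcases eq_or_lt_of_le hu.1 with h0 | h0
    · rw [← h0, hf0]
    rcases eq_or_lt_of_le hu.2 with h1 | h1
    · rw [h1]; exact hfα_le
    exact (hfneg u ⟨h0, h1⟩).le
  have hfge : ∀ u ∈ Icc α (1:ℝ), 0 ≤ f u := by
    intro u hu
    rcases eq_or_lt_of_le hu.1 with h0 | h0
    · rw [← h0]; exact hfα_ge
    rcases eq_or_lt_of_le hu.2 with h1 | h1
    · rw [h1, hf1]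
    exact (hfpos u ⟨h0, h1⟩).le
  -- the last "bad" point
  set Z : Set ℝ := {ξ | ξ ∈ Icc (0:ℝ) r ∧ V ξ ≤ 0} with hZ
  have hZne : Z.Nonempty := ⟨ξ₀, hξ₀, hVξ₀⟩
  have hZclosed : IsClosed Z := by
    have : Z = Icc (0:ℝ) r ∩ V ⁻¹' (Iic 0) := by
      ext x
      simp only [hZ, mem_setOf_eq, mem_inter_iff, mem_preimage, mem_Iic]
    rw [this]
    exact ContinuousOn.preimage_isClosed_of_isClosed
      (fun x hx => ((hV x hx).continuousAt).continuousWithinAt) isClosed_Icc isClosed_Iic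
  have hZcomp : IsCompact Z :=
    isCompact_Icc.of_isClosed_subset hZclosed (fun x hx => hx.1)
  set ξ₂ : ℝ := sSup Z with hξ₂def
  have hξ₂Z : ξ₂ ∈ Z := hZclosed.csSup_mem hZne hZcomp.bddAbove
  have hξ₂Icc : ξ₂ ∈ Icc (0:ℝ) r := hξ₂Z.1
  have hξ₂r : ξ₂ < r := by
    rcases eq_or_lt_of_le hξ₂Icc.2 with h | h
    · exfalso; have := hξ₂Z.2; rw [h, hVr] at this; linarith
    · exact h
  have hafter : ∀ ξ, ξ₂ < ξ → ξ ≤ r → 0 < V ξ := by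
    intro ξ h1 h2
    by_contra h3
    push_neg at h3
    have : ξ ∈ Z := ⟨⟨le_trans hξ₂Icc.1 h1.le, h2⟩, h3⟩
    have := le_csSup hZcomp.bddAbove this
    linarith
  have hVξ₂ : V ξ₂ = 0 := by
    refine le_antisymm hξ₂Z.2 ?_
    have h1 : Filter.Tendsto V (nhdsWithin ξ₂ (Ioi ξ₂)) (nhds (V ξ₂)) :=
      ((hV ξ₂ hξ₂Icc).continuousAt).continuousWithinAt.tendsto
    refine ge_of_tendsto h1 ?_
    filter_upwards [Ioo_mem_nhdsGT_of_mem (show ξ₂ ∈ Ico ξ₂ r from ⟨le_refl _, hξ₂r⟩)]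
      with u hu
    exact (hafter u hu.1 hu.2.le).le
  have hsub : Icc ξ₂ r ⊆ Icc (0:ℝ) r := Icc_subset_Icc hξ₂Icc.1 le_rfl
  -- U is monotone on [ξ₂, r]
  have hUmono : MonotoneOn U (Icc ξ₂ r) := by
    refine (strictMonoOn_of_deriv_pos (convex_Icc ξ₂ r)
      (fun x hx => ((hU x (hsub hx)).continuousAt).continuousWithinAt) ?_).monotoneOn
    intro x hx
    rw [interior_Icc] at hx
    rw [(hU x (hsub ⟨hx.1.le, hx.2.le⟩)).deriv]
    exact hafter x hx.1 hx.2.le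
  -- b := U ξ₂ < α
  have hbα : U ξ₂ < α := by
    by_contra hba
    push_neg at hba
    -- then U ≥ α on [ξ₂, r], so g := V·exp(cξ) is nonincreasing there
    set g : ℝ → ℝ := fun ξ => V ξ * Real.exp (c * ξ) with hg
    have hgderiv : ∀ ξ ∈ Icc (0:ℝ) r, HasDerivAt g (-f (U ξ) * Real.exp (c * ξ)) ξ := by
      intro ξ hξ
      have h1 : HasDerivAt (fun ξ : ℝ => c * ξ) c ξ := by
        simpa using (hasDerivAt_id ξ).const_mul c
      have h2 := h1.exp
      have h3 := (hV ξ hξ).mul h2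
      exact h3.congr_deriv (by ring)
    have hganti : AntitoneOn g (Icc ξ₂ r) := by
      refine antitoneOn_of_deriv_nonpos (convex_Icc ξ₂ r)
        (fun x hx => ((hgderiv x (hsub hx)).continuousAt).continuousWithinAt)
        (fun x hx => by
          rw [interior_Icc] at hx
          exact ((hgderiv x (hsub ⟨hx.1.le, hx.2.le⟩)).differentiableAt).differentiableWithinAt)
        ?_
      intro x hx
      rw [interior_Icc] at hx
      have hxIcc : x ∈ Icc ξ₂ r := ⟨hx.1.le, hx.2.le⟩
      rw [(hgderiv x (hsub hxIcc)).deriv]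
      have hUx : α ≤ U x := le_trans hba (hUmono (left_mem_Icc.mpr hξ₂r.le) hxIcc hx.1.le)
      have := hfge (U x) ⟨hUx, (hrange x (hsub hxIcc)).2⟩
      have hexp := Real.exp_pos (c * x)
      nlinarith
    have h1 : g r ≤ g ξ₂ := hganti (left_mem_Icc.mpr hξ₂r.le) (right_mem_Icc.mpr hξ₂r.le) hξ₂r.le
    rw [hg] at h1
    simp only [hVξ₂, hVr, zero_mul] at h1
    have hexp := Real.exp_pos (c * r)
    nlinarith
  -- energy argument: E := V²/2 + F(U) is nondecreasing since c ≤ 0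
  set F : ℝ → ℝ := fun u => ∫ t in (0:ℝ)..u, f t with hF
  have hFderiv : ∀ u : ℝ, HasDerivAt F (f u) u := by
    intro u
    exact intervalIntegral.integral_hasDerivAt_right (hf.intervalIntegrable 0 u)
      (hf.stronglyMeasurableAtFilter _ _) hf.continuousAt
  set E : ℝ → ℝ := fun ξ => V ξ ^ 2 / 2 + F (U ξ) with hE
  have hEderiv : ∀ ξ ∈ Icc (0:ℝ) r, HasDerivAt E (-c * V ξ ^ 2) ξ := by
    intro ξ hξ
    have h1 : HasDerivAt (fun ξ => V ξ ^ 2 / 2) ((2 * V ξ ^ 1 * (-c * V ξ - f (U ξ))) / 2) ξ :=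
      ((hV ξ hξ).pow 2).div_const 2
    have h2 : HasDerivAt (fun ξ => F (U ξ)) (f (U ξ) * V ξ) ξ :=
      (hFderiv (U ξ)).comp ξ (hU ξ hξ)
    have h3 := h1.add h2
    exact h3.congr_deriv (by ring)
  have hEmono : MonotoneOn E (Icc (0:ℝ) r) := by
    refine monotoneOn_of_deriv_nonneg (convex_Icc 0 r)
      (fun x hx => ((hEderiv x hx).continuousAt).continuousWithinAt)
      (fun x hx => by
        rw [interior_Icc] at hx
        exact ((hEderiv x ⟨hx.1.le, hx.2.le⟩).differentiableAt).differentiableWithinAt)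
      ?_
    intro x hx
    rw [interior_Icc] at hx
    rw [(hEderiv x ⟨hx.1.le, hx.2.le⟩).deriv]
    nlinarith [sq_nonneg (V x)]
  have h0mem : (0:ℝ) ∈ Icc (0:ℝ) r := left_mem_Icc.mpr hr.le
  have hE0 : E 0 = θ ^ 2 / 2 := by
    simp [hE, hF, hU0, hV0]
  have hEξ₂ : E ξ₂ = F (U ξ₂) := by
    simp [hE, hVξ₂]
  have hFb : F (U ξ₂) ≤ 0 := by
    have hb0 : 0 ≤ U ξ₂ := (hrange ξ₂ hξ₂Icc).1
    have : 0 ≤ ∫ t in (0:ℝ)..(U ξ₂), -f t := by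
      refine intervalIntegral.integral_nonneg hb0 ?_
      intro u hu
      have := hfle u ⟨hu.1, le_trans hu.2 hbα.le⟩
      simpa using this
    rw [intervalIntegral.integral_neg] at this
    simpa [hF] using this
  have := hEmono h0mem hξ₂Icc hξ₂Icc.1
  rw [hE0, hEξ₂] at this
  nlinarith

/-- A "simple solution" of `U' = V`, `V' = -cV - f(U)` joining `(0,θ)` to `(1,Υ)`
with `θ, Υ > 0` and `0 ≤ U ≤ 1` has `V > 0` throughout, hence `U` is strictly
increasing. -/
theorem stmt_3 (f : ℝ → ℝ) (hf : Continuous f) (hf0 : f 0 = 0) (hf1 : f 1 = 0)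
    (α : ℝ) (hα : α ∈ Ioo (0:ℝ) 1)
    (hfneg : ∀ u ∈ Ioo (0:ℝ) α, f u < 0)
    (hfpos : ∀ u ∈ Ioo α (1:ℝ), f u > 0)
    (c r θ Υ : ℝ) (hr : 0 < r) (hθ : 0 < θ) (hΥ : 0 < Υ)
    (U V : ℝ → ℝ)
    (hU : ∀ ξ ∈ Icc (0:ℝ) r, HasDerivAt U (V ξ) ξ)
    (hV : ∀ ξ ∈ Icc (0:ℝ) r, HasDerivAt V (-c * V ξ - f (U ξ)) ξ)
    (hU0 : U 0 = 0) (hV0 : V 0 = θ) (hUr : U r = 1) (hVr : V r = Υ)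
    (hrange : ∀ ξ ∈ Icc (0:ℝ) r, 0 ≤ U ξ ∧ U ξ ≤ 1) :
    (∀ ξ ∈ Icc (0:ℝ) r, 0 < V ξ) ∧ StrictMonoOn U (Icc (0:ℝ) r) := by
  have hVpos : ∀ ξ ∈ Icc (0:ℝ) r, 0 < V ξ := by
    rcases le_or_gt c 0 with hc | hc
    · exact stmt_3_aux f hf hf0 hf1 α hα hfneg hfpos c r θ Υ hc hr hθ hΥ U V hU hV hU0 hV0
        hVr hrange
    · -- time- and space-reversed solution
      have hmem : ∀ s ∈ Icc (0:ℝ) r, r - s ∈ Icc (0:ℝ) r := by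
        intro s hs
        exact ⟨by linarith [hs.2], by linarith [hs.1]⟩
      have hrev : ∀ s ∈ Icc (0:ℝ) r, 0 < V (r - s) := by
        refine stmt_3_aux (fun u => -f (1 - u))
          ((hf.comp (continuous_const.sub continuous_id)).neg)
          (by simpa using hf1) (by simpa using hf0)
          (1 - α) ⟨by linarith [hα.2], by linarith [hα.1]⟩
          (fun u hu => by
            have := hfpos (1 - u) ⟨by linarith [hu.2], by linarith [hu.1]⟩
            simpa using this)
          (fun u hu => by
            have := hfneg (1 - u) ⟨by linarith [hu.2], by linarith [hu.1]⟩
            simpa using this)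
          (-c) r Υ θ (by linarith) hr hΥ hθ
          (fun s => 1 - U (r - s)) (fun s => V (r - s))
          ?_ ?_ (by simp [hUr]) (by simpa using hVr) (by simpa using hV0)
          (fun s hs => by
            have := hrange (r - s) (hmem s hs)
            exact ⟨by show (0:ℝ) ≤ 1 - U (r - s); linarith [this.2],
              by show 1 - U (r - s) ≤ 1; linarith [this.1]⟩)
        · intro s hs
          have h1 : HasDerivAt (fun s : ℝ => r - s) (-1) s := by
            exact (hasDerivAt_id' s).const_sub r
          have h2 := (hU (r - s) (hmem s hs)).comp s h1
          have h3 := (hasDerivAt_const s (1:ℝ)).sub h2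
          exact h3.congr_deriv (by ring)
        · intro s hs
          have h1 : HasDerivAt (fun s : ℝ => r - s) (-1) s := by
            exact (hasDerivAt_id' s).const_sub r
          have h2 := (hV (r - s) (hmem s hs)).comp s h1
          exact h2.congr_deriv (by simp only [sub_sub_cancel]; ring)
      intro ξ hξ
      have := hrev (r - ξ) (hmem ξ hξ)
      simpa using this
  refine ⟨hVpos, ?_⟩
  refine strictMonoOn_of_deriv_pos (convex_Icc 0 r)
    (fun x hx => ((hU x hx).continuousAt).continuousWithinAt) ?_
  intro x hx
  rw [interior_Icc] at hx
  rw [(hU x ⟨hx.1.le, hx.2.le⟩).deriv]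
  exact hVpos x ⟨hx.1.le, hx.2.le⟩
end

section
/- Let f : [0,1] → ℝ be continuous with |f|_∞ = max_{0≤s≤1} |f(s)|, let c ∈ ℝ, and suppose θ > |c| + |f|_∞ + 1. Then the solution of U' = V, V' = -cV - f(U) starting at (U,V) = (0,θ) reaches the line U = 1 at a point (1,Υ) with Υ ≥ θ - |c| - |f|_∞, and along the whole orbit V ≥ θ - (|c| + |f|_∞)·U > 1 for 0 ≤ U ≤ 1. In particular, writing the orbit as V = P(U), one has P(U) ≥ θ - (|c| + |f|_∞)U for all U ∈ [0,1]. -/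
open Set

/-- For `θ > |c| + |f|_∞ + 1`, the orbit starting at `(0,θ)` stays above the
line `V = θ - (|c| + |f|_∞)U > 1`, so it reaches `U = 1` at a height
`Υ ≥ θ - |c| - |f|_∞`; in graph form, `P(U) ≥ θ - (|c| + |f|_∞)U` on `[0,1]`. -/
theorem stmt_6 (f : ℝ → ℝ) (hf : ContinuousOn f (Icc (0:ℝ) 1))
    (M : ℝ) (hM : M = sSup ((fun s => |f s|) '' Icc (0:ℝ) 1))
    (c θ : ℝ) (hθ : |c| + M + 1 < θ)
    (r : ℝ) (hr : 0 < r) (U V P : ℝ → ℝ)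
    (hU : ∀ ξ ∈ Icc (0:ℝ) r, HasDerivAt U (V ξ) ξ)
    (hV : ∀ ξ ∈ Icc (0:ℝ) r, HasDerivAt V (-c * V ξ - f (U ξ)) ξ)
    (hU0 : U 0 = 0) (hV0 : V 0 = θ) (hUr : U r = 1)
    (hrange : ∀ ξ ∈ Icc (0:ℝ) r, 0 ≤ U ξ ∧ U ξ ≤ 1)
    (hgraph : ∀ ξ ∈ Icc (0:ℝ) r, P (U ξ) = V ξ) :
    (θ - |c| - M ≤ V r) ∧
      (∀ ξ ∈ Icc (0:ℝ) r, θ - (|c| + M) * U ξ ≤ V ξ ∧ 1 < V ξ) ∧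
      (∀ u ∈ Icc (0:ℝ) 1, θ - (|c| + M) * u ≤ P u) := by
  have hbdd : BddAbove ((fun s => |f s|) '' Icc (0:ℝ) 1) :=
    (isCompact_Icc.image_of_continuousOn hf.abs).bddAbove
  have hfb : ∀ s ∈ Icc (0:ℝ) 1, |f s| ≤ M := fun s hs => hM ▸ le_csSup hbdd ⟨s, hs, rfl⟩
  have hM0 : 0 ≤ M := le_trans (abs_nonneg _) (hfb 0 (by norm_num))
  set K := |c| + M with hK
  have hK0 : 0 ≤ K := add_nonneg (abs_nonneg c) hM0
  have hθ1 : K + 1 < θ := by linarith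
  have hUc : ContinuousOn U (Icc 0 r) := fun x hx => (hU x hx).continuousAt.continuousWithinAt
  have hVc : ContinuousOn V (Icc 0 r) := fun x hx => (hV x hx).continuousAt.continuousWithinAt
  set g : ℝ → ℝ := fun ξ => V ξ + K * U ξ with hg
  have hgc : ContinuousOn g (Icc 0 r) := hVc.add (continuousOn_const.mul hUc)
  have hg' : ∀ x ∈ Icc (0:ℝ) r, HasDerivAt g (-c * V x - f (U x) + K * V x) x := fun x hx =>
    (hV x hx).add ((hU x hx).const_mul K)
  have hd : ∀ x ∈ Icc (0:ℝ) r, 1 ≤ V x → 0 ≤ -c * V x - f (U x) + K * V x := by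
    intro x hx h1
    have hfx : |f (U x)| ≤ M := hfb _ ⟨(hrange x hx).1, (hrange x hx).2⟩
    have h1' : (0:ℝ) ≤ V x := le_trans zero_le_one h1
    have hca : -c + |c| ≥ 0 := by
      have := le_abs_self c; linarith
    have hfx' := abs_le.mp hfx
    have : K = |c| + M := hK
    nlinarith [hfx'.1, hfx'.2]
  have mono : ∀ t ∈ Icc (0:ℝ) r, (∀ s ∈ Ioo (0:ℝ) t, 1 ≤ V s) → MonotoneOn g (Icc 0 t) := by
    intro t ht hV1
    have hsub : Icc (0:ℝ) t ⊆ Icc 0 r := Icc_subset_Icc le_rfl ht.2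
    have hint : interior (Icc (0:ℝ) t) = Ioo 0 t := interior_Icc
    apply monotoneOn_of_deriv_nonneg (convex_Icc 0 t) (hgc.mono hsub)
    · intro x hx
      rw [hint] at hx
      have hx' : x ∈ Icc (0:ℝ) r := hsub ⟨hx.1.le, hx.2.le⟩
      exact (hg' x hx').differentiableAt.differentiableWithinAt
    · intro x hx
      rw [hint] at hx
      have hx' : x ∈ Icc (0:ℝ) r := hsub ⟨hx.1.le, hx.2.le⟩
      rw [(hg' x hx').deriv]
      exact hd x hx' (hV1 x hx)
  have hpos : ∀ t ∈ Icc (0:ℝ) r, 1 < V t := by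
    by_contra h
    push_neg at h
    obtain ⟨t0, ht0, hVt0⟩ := h
    set S := Icc (0:ℝ) r ∩ V ⁻¹' Iic 1 with hS
    have hSne : S.Nonempty := ⟨t0, ht0, hVt0⟩
    have hSclosed : IsClosed S :=
      hVc.preimage_isClosed_of_isClosed isClosed_Icc isClosed_Iic
    have hSbdd : BddBelow S := ⟨0, fun x hx => hx.1.1⟩
    set m := sInf S with hm
    have hmS : m ∈ S := hSclosed.csInf_mem hSne hSbdd
    have hlt : ∀ s ∈ Ioo (0:ℝ) m, 1 ≤ V s := by
      intro s hs
      by_contra hc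
      push_neg at hc
      have hsS : s ∈ S := ⟨⟨hs.1.le, hs.2.le.trans hmS.1.2⟩, hc.le⟩
      exact absurd (csInf_le hSbdd hsS) (not_le.mpr hs.2)
    have hmono := mono m hmS.1 hlt
    have hθm : θ ≤ g m := by
      have h0m : (0:ℝ) ∈ Icc (0:ℝ) m := ⟨le_rfl, hmS.1.1⟩
      have := hmono h0m ⟨hmS.1.1, le_rfl⟩ hmS.1.1
      simpa [hg, hU0, hV0] using this
    have hUm := hrange m hmS.1
    have hVm : V m ≤ 1 := hmS.2
    have : g m = V m + K * U m := rfl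
    nlinarith [hUm.1, hUm.2]
  have hmonoAll : MonotoneOn g (Icc 0 r) :=
    mono r ⟨hr.le, le_rfl⟩ (fun s hs => (hpos s ⟨hs.1.le, hs.2.le⟩).le)
  have hgθ : ∀ ξ ∈ Icc (0:ℝ) r, θ ≤ V ξ + K * U ξ := by
    intro ξ hξ
    have := hmonoAll ⟨le_rfl, hr.le⟩ hξ hξ.1
    simpa [hg, hU0, hV0] using this
  refine ⟨?_, ?_, ?_⟩
  · have := hgθ r ⟨hr.le, le_rfl⟩
    rw [hUr] at this
    have : θ ≤ V r + K := by linarith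
    have hKe : K = |c| + M := hK
    linarith
  · intro ξ hξ
    have := hgθ ξ hξ
    exact ⟨by linarith, hpos ξ hξ⟩
  · intro u hu
    have hIVT : Icc (U 0) (U r) ⊆ U '' Icc 0 r := intermediate_value_Icc hr.le hUc
    obtain ⟨ξ, hξ, hUξ⟩ := hIVT (by rw [hU0, hUr]; exact hu)
    rw [← hUξ, hgraph ξ hξ]
    have := hgθ ξ hξ
    rw [hUξ] at this ⊢
    linarith
end

section
/- Let f : [0,1] → ℝ be continuous and θ₀ > 0. Then there exists c₀ = |f|_∞/θ₀ > 0 such that for every c > c₀, any simple solution of U' = V, V' = -cV - f(U) starting at (0,θ) with θ ≥ θ₀ and reaching (1,Υ) satisfies Υ < θ; indeed the whole orbit stays strictly below the line V = θ after leaving it. -/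
open Set Filter Topology

/-- For speed `c > |f|_∞ / θ₀`, a simple solution starting at `(0,θ)` with
`θ ≥ θ₀` ends at `(1,Υ)` with `Υ < θ`, the orbit staying strictly below the
line `V = θ` after the initial time. -/
theorem stmt_7 (f : ℝ → ℝ) (hf : ContinuousOn f (Icc (0:ℝ) 1))
    (M : ℝ) (hM : M = sSup ((fun s => |f s|) '' Icc (0:ℝ) 1))
    (θ₀ : ℝ) (hθ₀ : 0 < θ₀) (c : ℝ) (hc : M / θ₀ < c)
    (θ Υ r : ℝ) (hθ : θ₀ ≤ θ) (hΥ : 0 < Υ) (hr : 0 < r)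
    (U V : ℝ → ℝ)
    (hU : ∀ ξ ∈ Icc (0:ℝ) r, HasDerivAt U (V ξ) ξ)
    (hV : ∀ ξ ∈ Icc (0:ℝ) r, HasDerivAt V (-c * V ξ - f (U ξ)) ξ)
    (hU0 : U 0 = 0) (hV0 : V 0 = θ) (hUr : U r = 1) (hVr : V r = Υ)
    (hVpos : ∀ ξ ∈ Icc (0:ℝ) r, 0 < V ξ)
    (hrange : ∀ ξ ∈ Icc (0:ℝ) r, 0 ≤ U ξ ∧ U ξ ≤ 1) :
    Υ < θ ∧ ∀ ξ ∈ Ioc (0:ℝ) r, V ξ < θ := by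
  -- bound on f
  have hbdd : BddAbove ((fun s => |f s|) '' Icc (0:ℝ) 1) :=
    (isCompact_Icc.image_of_continuousOn hf.abs).bddAbove
  have hfM : ∀ s ∈ Icc (0:ℝ) 1, |f s| ≤ M := by
    intro s hs; rw [hM]; exact le_csSup hbdd ⟨s, hs, rfl⟩
  have hM0 : 0 ≤ M := le_trans (abs_nonneg _) (hfM 0 ⟨le_refl _, zero_le_one⟩)
  have hcpos : 0 < c := lt_of_le_of_lt (div_nonneg hM0 hθ₀.le) hc
  have hMc : M < c * θ₀ := (div_lt_iff₀ hθ₀).mp hc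
  have hMcθ : M < c * θ := lt_of_lt_of_le hMc (by nlinarith)
  -- derivative negative whenever V ξ ≥ θ
  have hderiv_neg : ∀ ξ ∈ Icc (0:ℝ) r, θ ≤ V ξ → -c * V ξ - f (U ξ) < 0 := by
    intro ξ hξ hVξ
    have hUξ := hrange ξ hξ
    have h1 : -M ≤ f (U ξ) := neg_le_of_abs_le (hfM _ ⟨hUξ.1, hUξ.2⟩)
    nlinarith
  have hVcont : ContinuousOn V (Icc 0 r) := fun ξ hξ =>
    (hV ξ hξ).continuousAt.continuousWithinAt
  -- Step 1: V ≤ θ on [0,r]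
  have h1 : ∀ ξ ∈ Icc (0:ℝ) r, V ξ ≤ θ := by
    intro ξ₁ hξ₁
    by_contra hcon
    push_neg at hcon
    set T : Set ℝ := Icc 0 ξ₁ ∩ V ⁻¹' Iic θ with hT
    have hsub : Icc 0 ξ₁ ⊆ Icc 0 r := Icc_subset_Icc le_rfl hξ₁.2
    have hTclosed : IsClosed T :=
      (hVcont.mono hsub).preimage_isClosed_of_isClosed isClosed_Icc isClosed_Iic
    have hTne : T.Nonempty := ⟨0, ⟨le_refl _, hξ₁.1⟩, by simp [hV0, hθ]⟩
    have hTbdd : BddAbove T := ⟨ξ₁, fun x hx => hx.1.2⟩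
    set s := sSup T with hs
    have hsT : s ∈ T := hTclosed.csSup_mem hTne hTbdd
    have hsξ₁ : s ≤ ξ₁ := hsT.1.2
    have hs0 : 0 ≤ s := hsT.1.1
    have hslt : s < ξ₁ := by
      rcases lt_or_eq_of_le hsξ₁ with h | h
      · exact h
      · exfalso; rw [h] at hsT; exact absurd hsT.2 (not_le.mpr hcon)
    -- V > θ on (s, ξ₁]
    have hVgt : ∀ η ∈ Ioc s ξ₁, θ < V η := by
      intro η hη
      by_contra hcon2
      push_neg at hcon2
      have : η ∈ T := ⟨⟨hs0.trans hη.1.le, hη.2⟩, hcon2⟩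
      exact absurd (le_csSup hTbdd this) (not_le.mpr hη.1)
    -- V strictly decreasing on [s, ξ₁]
    have hanti : StrictAntiOn V (Icc s ξ₁) := by
      apply strictAntiOn_of_deriv_neg (convex_Icc s ξ₁)
      · exact hVcont.mono (Icc_subset_Icc hs0 hξ₁.2)
      · intro η hη
        rw [interior_Icc] at hη
        have hηr : η ∈ Icc (0:ℝ) r := ⟨hs0.trans hη.1.le, hη.2.le.trans hξ₁.2⟩
        rw [(hV η hηr).deriv]
        exact hderiv_neg η hηr (hVgt η ⟨hη.1, hη.2.le⟩).le
    have := hanti ⟨le_refl s, hsξ₁⟩ ⟨hsξ₁, le_refl ξ₁⟩ hslt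
    have hVs : V s ≤ θ := hsT.2
    linarith
  -- Step 2: strict inequality on (0, r]
  have h2 : ∀ ξ ∈ Ioc (0:ℝ) r, V ξ < θ := by
    intro ξ hξ
    have hξI : ξ ∈ Icc (0:ℝ) r := ⟨hξ.1.le, hξ.2⟩
    rcases lt_or_eq_of_le (h1 ξ hξI) with h | h
    · exact h
    · exfalso
      have hd := hV ξ hξI
      have hdneg : -c * V ξ - f (U ξ) < 0 := hderiv_neg ξ hξI h.ge
      have hslope : Tendsto (slope V ξ) (𝓝[≠] ξ) (𝓝 (-c * V ξ - f (U ξ))) :=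
        hasDerivAt_iff_tendsto_slope.mp hd
      have e1 : ∀ᶠ η in 𝓝[<] ξ, slope V ξ η < 0 :=
        (hslope.mono_left (nhdsWithin_mono ξ (fun x hx => ne_of_lt hx))).eventually
          (Iio_mem_nhds hdneg)
      have e2 : ∀ᶠ η in 𝓝[<] ξ, 0 < η :=
        eventually_nhdsWithin_of_eventually_nhds (eventually_gt_nhds hξ.1)
      have e3 : ∀ᶠ η in 𝓝[<] ξ, η < ξ := eventually_mem_nhdsWithin
      obtain ⟨η, hη1, hη2, hη3⟩ := (e1.and (e2.and e3)).exists
      have hslope_val : slope V ξ η = (V η - V ξ) / (η - ξ) := by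
        rw [slope_def_field]
      rw [hslope_val] at hη1
      have hsub : η - ξ < 0 := by linarith
      have hpos : 0 < V η - V ξ := by
        rcases div_neg_iff.mp hη1 with ⟨ha, _⟩ | ⟨_, hb⟩
        · exact ha
        · linarith
      have hηI : η ∈ Icc (0:ℝ) r := ⟨hη2.le, hη3.le.trans hξ.2⟩
      have := h1 η hηI
      linarith
  exact ⟨by rw [← hVr]; exact h2 r ⟨hr, le_refl r⟩, h2⟩
end

section
/- Let X be a Banach space, L₀ : D(L₀) ⊆ X → X a closed operator, π : D(L₀) → 𝕜 linear, φ ∈ D(L₀), and L = L₀ + π(·)φ. Assume: (a) L₀φ = 0 and π(φ) = 0; (b) 0 is an algebraically simple eigenvalue of L₀, i.e. Ker(L₀) = span{φ} and there is no w ∈ D(L₀) with L₀w = φ. Then for every μ ∈ ρ(L₀) with μ ≠ 0, μ ∈ ρ(L), and the resolvent is given by (L - μI)^{-1} f = (L₀ - μI)^{-1} f + μ^{-1} π((L₀-μI)^{-1}f)·φ. -/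
/-- Rank-one perturbation `L = L₀ + π(·)φ` with `L₀φ = 0`, `π(φ) = 0` and `0`
algebraically simple for `L₀`: every `μ ∈ ρ(L₀)`, `μ ≠ 0` belongs to `ρ(L)`,
with resolvent `(L-μ)⁻¹f = (L₀-μ)⁻¹f + μ⁻¹π((L₀-μ)⁻¹f)·φ`. -/
theorem stmt_11 {𝕜 : Type*} [NontriviallyNormedField 𝕜]
    {X : Type*} [NormedAddCommGroup X] [NormedSpace 𝕜 X]
    (dom : Submodule 𝕜 X) (L₀ : dom →ₗ[𝕜] X) (π : dom →ₗ[𝕜] 𝕜) (φ : dom)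
    (hφ0 : L₀ φ = 0) (hπφ : π φ = 0)
    (hker : ∀ w : dom, L₀ w = 0 → ∃ t : 𝕜, w = t • φ)
    (hsimple : ¬ ∃ w : dom, L₀ w = (φ : X))
    (μ : 𝕜) (hμ : μ ≠ 0)
    (hres : Function.Bijective (fun w : dom => L₀ w - μ • (w : X))) :
    Function.Bijective (fun w : dom => L₀ w + π w • (φ : X) - μ • (w : X)) ∧
      ∀ (f : X) (wf : dom), L₀ wf - μ • (wf : X) = f →
        L₀ (wf + (μ⁻¹ * π wf) • φ)
            + π (wf + (μ⁻¹ * π wf) • φ) • (φ : X)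
            - μ • ((wf + (μ⁻¹ * π wf) • φ : dom) : X) = f := by
  have key : ∀ (f : X) (wf : dom), L₀ wf - μ • (wf : X) = f →
      L₀ (wf + (μ⁻¹ * π wf) • φ)
          + π (wf + (μ⁻¹ * π wf) • φ) • (φ : X)
          - μ • ((wf + (μ⁻¹ * π wf) • φ : dom) : X) = f := by
    intro f wf h
    have hc : μ • ((μ⁻¹ * π wf) • (φ : X)) = π wf • (φ : X) := by
      rw [smul_smul, ← mul_assoc, mul_inv_cancel₀ hμ, one_mul]
    simp only [map_add, map_smul, hφ0, hπφ, smul_zero, add_zero, smul_eq_mul, mul_zero,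
      Submodule.coe_add, Submodule.coe_smul, smul_add, hc]
    rw [← h]
    abel
  refine ⟨⟨?_, ?_⟩, key⟩
  · intro a b hab
    have hab' : L₀ a + π a • (φ : X) - μ • (a : X) = L₀ b + π b • (φ : X) - μ • (b : X) := hab
    have h0 : L₀ (a - b) - μ • ((a - b : dom) : X) = -(π (a - b)) • (φ : X) := by
      simp only [map_sub, Submodule.coe_sub, smul_sub, neg_smul, sub_smul]
      have : L₀ a - μ • (a : X) + π a • (φ : X) = L₀ b - μ • (b : X) + π b • (φ : X) := by
        rw [← sub_add_eq_add_sub, ← sub_add_eq_add_sub] at hab'; exact hab'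
      linear_combination (norm := module) this
    have h1 : (fun w : dom => L₀ w - μ • (w : X)) ((μ⁻¹ * π (a - b)) • φ)
        = -(π (a - b)) • (φ : X) := by
      simp only [map_smul, hφ0, smul_zero, Submodule.coe_smul, smul_smul, zero_sub, ← neg_smul,
        ← mul_assoc, mul_inv_cancel₀ hμ, one_mul]
    have h2 : a - b = (μ⁻¹ * π (a - b)) • φ := hres.injective (h0.trans h1.symm)
    have h3 : π (a - b) = 0 := by
      have := congrArg π h2
      simpa [hπφ] using this
    have : a - b = 0 := by rw [h2, h3, mul_zero, zero_smul]
    exact sub_eq_zero.mp this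
  · intro f
    obtain ⟨wf, hwf⟩ := hres.surjective f
    exact ⟨wf + (μ⁻¹ * π wf) • φ, key f wf hwf⟩
end

section
/- Let f : [0,1] → ℝ be C¹ with f(0) = f(1) = 0, and consider the initial-boundary value problem u_t = u_xx + λ(u_x)u_x + f(u) on (a,b) with λ(z) = -F(1)/‖z‖²_{L²(a,b)}, u(a,t) = 0, u(b,t) = 1. If u is a classical solution on [0,T] with initial datum satisfying 0 ≤ u₀ ≤ 1, then 0 ≤ u(x,t) ≤ 1 for all x ∈ [a,b] and t ∈ [0,T]. -/
open Set Filter Real Topology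

/-- If `g` has a (two-sided) derivative at `t₀ > 0` and `t₀` is a minimum of `g`
on `Icc 0 t₀`, then the derivative at the right endpoint is nonpositive. -/
lemma deriv_nonpos_endpoint {g : ℝ → ℝ} {g' t₀ : ℝ} (ht₀ : 0 < t₀)
    (hd : HasDerivAt g g' t₀) (hmin : ∀ t ∈ Icc (0:ℝ) t₀, g t₀ ≤ g t) : g' ≤ 0 := by
  rw [hasDerivAt_iff_tendsto_slope] at hd
  have htend : Tendsto (slope g t₀) (𝓝[<] t₀) (𝓝 g') :=
    hd.mono_left (nhdsWithin_mono _ fun y hy => ne_of_lt hy)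
  refine le_of_tendsto htend ?_
  filter_upwards [Ioo_mem_nhdsLT_of_mem (⟨ht₀, le_refl t₀⟩ : t₀ ∈ Ioc (0:ℝ) t₀)] with t ht
  rw [slope_def_field]
  have h1 : 0 ≤ g t - g t₀ := sub_nonneg.2 (hmin t ⟨ht.1.le, ht.2.le⟩)
  have h2 : t - t₀ < 0 := sub_neg.2 ht.2
  exact div_nonpos_of_nonneg_of_nonpos h1 h2.le

/-- Second derivative test (necessity): at an interior minimum the second
derivative is nonnegative. -/
lemma second_deriv_nonneg_at_min {a b x₀ d : ℝ} {g g1 : ℝ → ℝ}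
    (hx₀ : x₀ ∈ Ioo a b)
    (hg : ∀ x ∈ Ioo a b, HasDerivAt g (g1 x) x)
    (hg10 : g1 x₀ = 0)
    (hd : HasDerivAt g1 d x₀)
    (hmin : ∀ y ∈ Icc a b, g x₀ ≤ g y) : 0 ≤ d := by
  by_contra h
  push_neg at h
  rw [hasDerivAt_iff_tendsto_slope] at hd
  have htend : Tendsto (slope g1 x₀) (𝓝[>] x₀) (𝓝 d) :=
    hd.mono_left (nhdsWithin_mono _ fun y hy => ne_of_gt hy)
  have hev : ∀ᶠ y in 𝓝[>] x₀, slope g1 x₀ y < 0 :=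
    htend.eventually (Filter.Tendsto.eventually_lt_const h tendsto_id) |>.mono (fun y hy => hy) |>.mono
      (fun y hy => hy)
  have hev2 : ∀ᶠ y in 𝓝[>] x₀, y < b :=
    eventually_nhdsWithin_of_eventually_nhds (Filter.Tendsto.eventually_lt_const hx₀.2 tendsto_id)
  obtain ⟨u, hu, hsub⟩ := mem_nhdsGT_iff_exists_Ioo_subset.1 (hev.and hev2)
  obtain ⟨x₁, hx₁⟩ := exists_between (mem_Ioi.1 hu)
  have hx₁b : x₁ < b := (hsub ⟨hx₁.1, hx₁.2⟩).2
  have hmemIoo : ∀ x ∈ Icc x₀ x₁, x ∈ Ioo a b := fun x hx =>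
    ⟨lt_of_lt_of_le hx₀.1 hx.1, lt_of_le_of_lt hx.2 hx₁b⟩
  have hcont : ContinuousOn g (Icc x₀ x₁) := fun x hx =>
    ((hg x (hmemIoo x hx)).continuousAt).continuousWithinAt
  have hanti : StrictAntiOn g (Icc x₀ x₁) := by
    apply strictAntiOn_of_deriv_neg (convex_Icc _ _) hcont
    intro x hx
    rw [interior_Icc] at hx
    have hxab : x ∈ Ioo a b := ⟨lt_trans hx₀.1 hx.1, lt_trans hx.2 hx₁b⟩
    rw [(hg x hxab).deriv]
    have hslope := (hsub ⟨hx.1, lt_trans hx.2 hx₁.2⟩).1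
    rw [slope_def_field, hg10, sub_zero] at hslope
    have hpos : 0 < x - x₀ := sub_pos.2 hx.1
    have := mul_neg_of_neg_of_pos hslope hpos
    rwa [div_mul_cancel₀ _ (ne_of_gt hpos)] at this
  have hlt : g x₁ < g x₀ :=
    hanti (left_mem_Icc.2 hx₁.1.le) (right_mem_Icc.2 hx₁.1.le) hx₁.1
  exact absurd (hmin x₁ ⟨(hx₀.1.trans hx₁.1).le, hx₁b.le⟩) (not_le.2 hlt)

/-- Main comparison lemma: nonnegativity is preserved for
`u_t = u_xx + c(t) u_x + f(u)` with `f(0) = 0` and nonnegative boundary/initial data. -/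
lemma key_nonneg (a b T : ℝ) (hab : a < b) (hT : 0 < T)
    (f : ℝ → ℝ) (hf : ContDiff ℝ 1 f) (hf0 : f 0 = 0)
    (c : ℝ → ℝ)
    (u ux uxx ut : ℝ → ℝ → ℝ)
    (hcont : ContinuousOn (fun p : ℝ × ℝ => u p.1 p.2) (Icc a b ×ˢ Icc 0 T))
    (hux : ∀ t ∈ Ioc (0:ℝ) T, ∀ x ∈ Ioo a b,
      HasDerivAt (fun y => u y t) (ux x t) x)
    (huxx : ∀ t ∈ Ioc (0:ℝ) T, ∀ x ∈ Ioo a b,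
      HasDerivAt (fun y => ux y t) (uxx x t) x)
    (hut : ∀ t ∈ Ioc (0:ℝ) T, ∀ x ∈ Ioo a b,
      HasDerivAt (fun s => u x s) (ut x t) t)
    (heq : ∀ t ∈ Ioc (0:ℝ) T, ∀ x ∈ Ioo a b,
      ut x t = uxx x t + c t * ux x t + f (u x t))
    (hbca : ∀ t ∈ Icc (0:ℝ) T, 0 ≤ u a t) (hbcb : ∀ t ∈ Icc (0:ℝ) T, 0 ≤ u b t)
    (hinit : ∀ x ∈ Icc a b, 0 ≤ u x 0) :
    ∀ t ∈ Icc (0:ℝ) T, ∀ x ∈ Icc a b, 0 ≤ u x t := by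
  have hQc : IsCompact (Icc a b ×ˢ Icc (0:ℝ) T) := isCompact_Icc.prod isCompact_Icc
  have hQne : (Icc a b ×ˢ Icc (0:ℝ) T).Nonempty :=
    ⟨(a, 0), ⟨left_mem_Icc.2 hab.le, left_mem_Icc.2 hT.le⟩⟩
  obtain ⟨C, hC⟩ := hQc.exists_bound_of_continuousOn hcont
  have hC0 : 0 ≤ C := le_trans (norm_nonneg _) (hC _ hQne.choose_spec)
  -- Lipschitz-type bound for f near 0
  have hfd : Differentiable ℝ f := hf.differentiable one_ne_zero
  have hf'c : Continuous (deriv f) := hf.continuous_deriv le_rfl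
  obtain ⟨K0, hK0⟩ := (isCompact_Icc : IsCompact (Icc (-(C+1)) (C+1))).exists_bound_of_continuousOn
    hf'c.continuousOn
  set K := max K0 0 with hKdef
  have hKnn : 0 ≤ K := le_max_right _ _
  have hzero_mem : (0:ℝ) ∈ Icc (-(C+1)) (C+1) := by constructor <;> linarith
  have hlip : ∀ s ∈ Icc (-(C+1)) (C+1), s ≤ 0 → K * s ≤ f s := by
    intro s hs hs0
    have hb : ∀ x ∈ Icc (-(C+1)) (C+1), ‖deriv f x‖ ≤ K :=
      fun x hx => le_trans (hK0 x hx) (le_max_left _ _)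
    have h := (convex_Icc (-(C+1)) (C+1)).norm_image_sub_le_of_norm_deriv_le
      (fun x _ => (hfd x)) hb hzero_mem hs
    rw [hf0, sub_zero, sub_zero, Real.norm_eq_abs, Real.norm_eq_abs,
      abs_of_nonpos hs0] at h
    have := neg_abs_le (f s)
    nlinarith
  -- penalized function and its minimum
  set M := K + 1 with hMdef
  set v : ℝ × ℝ → ℝ := fun p => Real.exp (-M * p.2) * u p.1 p.2 with hvdef
  have hvcont : ContinuousOn v (Icc a b ×ˢ Icc (0:ℝ) T) :=
    ((Real.continuous_exp.comp ((continuous_const).mul continuous_snd)).continuousOn).mul hcont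
  obtain ⟨p₀, hp₀Q, hp₀min⟩ := hQc.exists_isMinOn hQne hvcont
  rw [isMinOn_iff] at hp₀min
  by_cases hμ : 0 ≤ v p₀
  · intro t ht x hx
    have h1 := hp₀min (x, t) ⟨hx, ht⟩
    have hE : (0:ℝ) < Real.exp (-M * t) := Real.exp_pos _
    have : 0 ≤ Real.exp (-M * t) * u x t := le_trans hμ h1
    exact le_of_mul_le_mul_left (by rwa [mul_zero]) hE
  · exfalso
    push_neg at hμ
    obtain ⟨x₀, t₀⟩ := p₀
    have hx₀Icc : x₀ ∈ Icc a b := hp₀Q.1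
    have ht₀Icc : t₀ ∈ Icc (0:ℝ) T := hp₀Q.2
    have hE : (0:ℝ) < Real.exp (-M * t₀) := Real.exp_pos _
    have hu0 : u x₀ t₀ < 0 := by
      by_contra hc
      push_neg at hc
      exact absurd (mul_nonneg hE.le hc) (not_le.2 hμ)
    have ht₀pos : 0 < t₀ := by
      rcases eq_or_lt_of_le ht₀Icc.1 with h | h
      · exact absurd (h ▸ hinit x₀ hx₀Icc) (not_le.2 hu0)
      · exact h
    have hx₀ : x₀ ∈ Ioo a b := by
      constructor
      · rcases eq_or_lt_of_le hx₀Icc.1 with h | h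
        · exact absurd (h ▸ hbca t₀ ht₀Icc) (not_le.2 hu0)
        · exact h
      · rcases eq_or_lt_of_le hx₀Icc.2 with h | h
        · exact absurd (h ▸ hbcb t₀ ht₀Icc) (not_le.2 hu0)
        · exact h
    have ht₀ : t₀ ∈ Ioc (0:ℝ) T := ⟨ht₀pos, ht₀Icc.2⟩
    -- spatial minimum at fixed time t₀
    have hminx : ∀ y ∈ Icc a b, u x₀ t₀ ≤ u y t₀ := by
      intro y hy
      have h1 := hp₀min (y, t₀) ⟨hy, ht₀Icc⟩
      exact le_of_mul_le_mul_left h1 hE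
    have hlocmin : IsLocalMin (fun y => u y t₀) x₀ := by
      filter_upwards [Ioo_mem_nhds hx₀.1 hx₀.2] with y hy
      exact hminx y (Ioo_subset_Icc_self hy)
    have hux0 : ux x₀ t₀ = 0 := hlocmin.hasDerivAt_eq_zero (hux t₀ ht₀ x₀ hx₀)
    have huxx0 : 0 ≤ uxx x₀ t₀ :=
      second_deriv_nonneg_at_min hx₀ (fun x hx => hux t₀ ht₀ x hx) hux0
        (huxx t₀ ht₀ x₀ hx₀) hminx
    -- time derivative of the penalized function
    have hexp : HasDerivAt (fun s => Real.exp (-M * s)) (Real.exp (-M * t₀) * (-M)) t₀ := by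
      simpa using ((hasDerivAt_id t₀).const_mul (-M)).exp
    have hg : HasDerivAt (fun s => Real.exp (-M * s) * u x₀ s)
        (Real.exp (-M * t₀) * (-M) * u x₀ t₀ + Real.exp (-M * t₀) * ut x₀ t₀) t₀ :=
      hexp.mul (hut t₀ ht₀ x₀ hx₀)
    have hgmin : ∀ t ∈ Icc (0:ℝ) t₀, Real.exp (-M * t₀) * u x₀ t₀ ≤ Real.exp (-M * t) * u x₀ t := by
      intro t ht
      exact hp₀min (x₀, t) ⟨hx₀Icc, ⟨ht.1, ht.2.trans ht₀Icc.2⟩⟩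
    have hg' := deriv_nonpos_endpoint ht₀pos hg hgmin
    -- the PDE at the minimum point
    have hueq := heq t₀ ht₀ x₀ hx₀
    rw [hux0, mul_zero, add_zero] at hueq
    have humem : u x₀ t₀ ∈ Icc (-(C+1)) (C+1) := by
      have := hC (x₀, t₀) ⟨hx₀Icc, ht₀Icc⟩
      rw [Real.norm_eq_abs] at this
      have h1 := abs_le.1 this
      constructor <;> linarith [h1.1, h1.2]
    have hfu : K * u x₀ t₀ ≤ f (u x₀ t₀) := hlip _ humem hu0.le
    have h1 : K * u x₀ t₀ ≤ ut x₀ t₀ := by rw [hueq]; linarith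
    have h3 := mul_le_mul_of_nonneg_left h1 hE.le
    have h5 : Real.exp (-M * t₀) * u x₀ t₀ < 0 := mul_neg_of_pos_of_neg hE hu0
    nlinarith [hg', h3, h5]

/-- Comparison with the constants `0` and `1` for the nonlocal problem
`u_t = u_xx + λ(u_x)u_x + f(u)`, `λ(z) = -F(1)/‖z‖²`, `u(a)=0`, `u(b)=1`:
if `0 ≤ u₀ ≤ 1` then `0 ≤ u ≤ 1` for all later times. -/
theorem stmt_18 (a b T : ℝ) (hab : a < b) (hT : 0 < T)
    (f : ℝ → ℝ) (hf : ContDiff ℝ 1 f) (hf0 : f 0 = 0) (hf1 : f 1 = 0)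
    (F1 : ℝ) (hF1 : F1 = -∫ s in (0:ℝ)..1, f s)
    (u ux uxx ut : ℝ → ℝ → ℝ)
    (hcont : ContinuousOn (fun p : ℝ × ℝ => u p.1 p.2) (Icc a b ×ˢ Icc 0 T))
    (hux : ∀ t ∈ Ioc (0:ℝ) T, ∀ x ∈ Ioo a b,
      HasDerivAt (fun y => u y t) (ux x t) x)
    (huxx : ∀ t ∈ Ioc (0:ℝ) T, ∀ x ∈ Ioo a b,
      HasDerivAt (fun y => ux y t) (uxx x t) x)
    (hut : ∀ t ∈ Ioc (0:ℝ) T, ∀ x ∈ Ioo a b,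
      HasDerivAt (fun s => u x s) (ut x t) t)
    (heq : ∀ t ∈ Ioc (0:ℝ) T, ∀ x ∈ Ioo a b,
      ut x t = uxx x t
        + (-F1 / ∫ y in a..b, (ux y t) ^ 2) * ux x t + f (u x t))
    (hbc : ∀ t ∈ Icc (0:ℝ) T, u a t = 0 ∧ u b t = 1)
    (hinit : ∀ x ∈ Icc a b, 0 ≤ u x 0 ∧ u x 0 ≤ 1) :
    ∀ t ∈ Icc (0:ℝ) T, ∀ x ∈ Icc a b, 0 ≤ u x t ∧ u x t ≤ 1 := by
  have hlow := key_nonneg a b T hab hT f hf hf0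
    (fun t => -F1 / ∫ y in a..b, (ux y t) ^ 2) u ux uxx ut hcont hux huxx hut
    heq
    (fun t ht => le_of_eq (hbc t ht).1.symm)
    (fun t ht => (hbc t ht).2.symm ▸ zero_le_one)
    (fun x hx => (hinit x hx).1)
  have hhigh := key_nonneg a b T hab hT (fun s => -f (1 - s))
    ((hf.comp (contDiff_const.sub contDiff_id)).neg)
    (by simp [hf1])
    (fun t => -F1 / ∫ y in a..b, (ux y t) ^ 2)
    (fun x t => 1 - u x t) (fun x t => -(ux x t)) (fun x t => -(uxx x t)) (fun x t => -(ut x t))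
    (continuousOn_const.sub hcont)
    (fun t ht x hx => (hux t ht x hx).const_sub 1)
    (fun t ht x hx => (huxx t ht x hx).neg)
    (fun t ht x hx => (hut t ht x hx).const_sub 1)
    (fun t ht x hx => by
      have h := heq t ht x hx
      show -(ut x t) = -(uxx x t) + _ * -(ux x t) + -f (1 - (1 - u x t))
      rw [sub_sub_cancel, h]; ring)
    (fun t ht => by show (0:ℝ) ≤ 1 - u a t; rw [(hbc t ht).1]; norm_num)
    (fun t ht => by show (0:ℝ) ≤ 1 - u b t; rw [(hbc t ht).2]; norm_num)
    (fun x hx => by show (0:ℝ) ≤ 1 - u x 0; linarith [(hinit x hx).2])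
  intro t ht x hx
  refine ⟨hlow t ht x hx, ?_⟩
  have := hhigh t ht x hx
  linarith
end
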